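/- Let W be an n×n positive definite Hermitian complex matrix with tr W = 1, let λ_max be its largest eigenvalue, and set q_k = (√W)_{kk} / tr √W. Then for every n×n unitary matrix U, Σ_{k=1}^n |(U √W)_{kk}|² ≤ (tr √W)² / n + √(n·λ_max) · Σ_{k=1}^n |q_k − 1/n|. -/

import Mathlib

open Matrix BigOperators
open scoped ComplexOrder

open Matrix BigOperators
open scoped ComplexOrder

lemma cs_dot {n : ℕ} (x y : Fin n → ℂ) :
    ‖star x ⬝ᵥ y‖ ^ 2 ≤ (star x ⬝ᵥ x).re * (star y ⬝ᵥ y).re := by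
  have h1 : ‖star x ⬝ᵥ y‖ ≤ ∑ i, ‖x i‖ * ‖y i‖ := by
    rw [dotProduct]
    refine (norm_sum_le _ _).trans (le_of_eq ?_)
    simp [Pi.star_apply]
  have h2 : (∑ i, ‖x i‖ * ‖y i‖) ^ 2 ≤
      (∑ i, ‖x i‖ ^ 2) * (∑ i, ‖y i‖ ^ 2) :=
    Finset.sum_mul_sq_le_sq_mul_sq _ _ _
  have hx : (star x ⬝ᵥ x).re = ∑ i, ‖x i‖ ^ 2 := by
    simp [dotProduct, Complex.re_sum, Pi.star_apply, ← Complex.normSq_eq_norm_sq,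
      Complex.normSq_apply, Complex.mul_re]
  have hy : (star y ⬝ᵥ y).re = ∑ i, ‖y i‖ ^ 2 := by
    simp [dotProduct, Complex.re_sum, Pi.star_apply, ← Complex.normSq_eq_norm_sq,
      Complex.normSq_apply, Complex.mul_re]
  rw [hx, hy]
  calc ‖star x ⬝ᵥ y‖ ^ 2 ≤ (∑ i, ‖x i‖ * ‖y i‖) ^ 2 := by
        apply pow_le_pow_left₀ (norm_nonneg _) h1
    _ ≤ _ := h2

lemma quad_le {n : ℕ} {M : Matrix (Fin n) (Fin n) ℂ} (hM : M.IsHermitian) {c : ℝ}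
    (hc : ∀ i, hM.eigenvalues i ≤ c) (v : Fin n → ℂ) :
    (star v ⬝ᵥ M *ᵥ v).re ≤ c * (star v ⬝ᵥ v).re := by
  set V : Matrix (Fin n) (Fin n) ℂ := (hM.eigenvectorUnitary : Matrix (Fin n) (Fin n) ℂ) with hV
  set w : Fin n → ℂ := (star V) *ᵥ v with hw
  have hsw : star w = star v ᵥ* V := by
    rw [hw, star_mulVec]; simp [Matrix.star_eq_conjTranspose]
  have key : star v ⬝ᵥ M *ᵥ v =
      star w ⬝ᵥ (diagonal (RCLike.ofReal ∘ hM.eigenvalues) : Matrix (Fin n) (Fin n) ℂ) *ᵥ w := by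
    conv_lhs => rw [hM.spectral_theorem, Unitary.conjStarAlgAut_apply]
    rw [hsw, hw, ← mulVec_mulVec, ← mulVec_mulVec, dotProduct_mulVec]
  have hww : star w ⬝ᵥ w = star v ⬝ᵥ v := by
    rw [hsw, hw, ← dotProduct_mulVec, mulVec_mulVec,
      (Matrix.mem_unitaryGroup_iff).mp hM.eigenvectorUnitary.2, one_mulVec]
  rw [key, ← hww]
  have hdiag : (star w ⬝ᵥ (diagonal (RCLike.ofReal ∘ hM.eigenvalues) : Matrix (Fin n) (Fin n) ℂ) *ᵥ w).re
      = ∑ i, hM.eigenvalues i * Complex.normSq (w i) := by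
    rw [dotProduct, Complex.re_sum]
    congr 1; funext i
    simp [mulVec_diagonal, Pi.star_apply, mul_comm, mul_left_comm, Complex.mul_re,
      Complex.normSq_apply]
    ring
  have hnorm : (star w ⬝ᵥ w).re = ∑ i, Complex.normSq (w i) := by
    simp [dotProduct, Complex.re_sum, Pi.star_apply, Complex.normSq_apply, Complex.mul_re]
  rw [hdiag, hnorm, Finset.mul_sum]
  exact Finset.sum_le_sum fun i _ => mul_le_mul_of_nonneg_right (hc i) (Complex.normSq_nonneg _)


/-- The square root of a positive semidefinite matrix, as defined in Mathlib (Dec 2024),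
since removed from Mathlib. -/
noncomputable def Matrix.PosSemidef.sqrt {n : Type*} [Fintype n] [DecidableEq n]
    {A : Matrix n n ℂ} (hA : A.PosSemidef) : Matrix n n ℂ :=
  (hA.isHermitian.eigenvectorUnitary : Matrix n n ℂ) *
    diagonal (fun i => ((√(hA.isHermitian.eigenvalues i) : ℝ) : ℂ)) *
    (star hA.isHermitian.eigenvectorUnitary : Matrix n n ℂ)


lemma Matrix.PosSemidef.posSemidef_sqrt {n : Type*} [Fintype n] [DecidableEq n]
    {A : Matrix n n ℂ} (hA : A.PosSemidef) : (Matrix.PosSemidef.sqrt hA).PosSemidef := by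
  have hd : (diagonal (fun i => ((√(hA.isHermitian.eigenvalues i) : ℝ) : ℂ))).PosSemidef :=
    PosSemidef.diagonal (fun i => Complex.zero_le_real.mpr (Real.sqrt_nonneg _))
  have := hd.mul_mul_conjTranspose_same (hA.isHermitian.eigenvectorUnitary : Matrix n n ℂ)
  unfold Matrix.PosSemidef.sqrt
  rwa [Matrix.star_eq_conjTranspose]

lemma Matrix.PosSemidef.sqrt_mul_self {n : Type*} [Fintype n] [DecidableEq n]
    {A : Matrix n n ℂ} (hA : A.PosSemidef) :
    Matrix.PosSemidef.sqrt hA * Matrix.PosSemidef.sqrt hA = A := by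
  have hV : (star hA.isHermitian.eigenvectorUnitary : Matrix n n ℂ) *
      (hA.isHermitian.eigenvectorUnitary : Matrix n n ℂ) = 1 := Unitary.coe_star_mul_self _
  have hD : diagonal (fun i => ((√(hA.isHermitian.eigenvalues i) : ℝ) : ℂ)) *
      diagonal (fun i => ((√(hA.isHermitian.eigenvalues i) : ℝ) : ℂ)) =
      diagonal (RCLike.ofReal ∘ hA.isHermitian.eigenvalues) := by
    rw [diagonal_mul_diagonal]; congr 1; funext i
    rw [← Complex.ofReal_mul, Real.mul_self_sqrt (hA.eigenvalues_nonneg i)]; rfl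
  conv_rhs => rw [hA.isHermitian.spectral_theorem, Unitary.conjStarAlgAut_apply]
  unfold Matrix.PosSemidef.sqrt
  rw [← hD]
  simp only [mul_assoc]
  rw [← mul_assoc (star hA.isHermitian.eigenvectorUnitary : Matrix n n ℂ), hV, one_mul]

/-- for a positive definite `W` with `tr W = 1` and any unitary `U`,
`∑ₖ |(U √W)ₖₖ|² ≤ (tr √W)²/n + √(n λ_max) ∑ₖ |qₖ − 1/n|`. -/
theorem diag_sq_upper_bound
    (n : ℕ) (hn : 0 < n)
    (W : Matrix (Fin n) (Fin n) ℂ) (hW : W.PosDef) (htr : W.trace = 1)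
    (lammax : ℝ) (hlam : lammax = ⨆ i, hW.posSemidef.isHermitian.eigenvalues i)
    (q : Fin n → ℝ)
    (hq : ∀ k, q k = ((Matrix.PosSemidef.sqrt hW.posSemidef) k k).re / (Matrix.PosSemidef.sqrt hW.posSemidef).trace.re)
    (U : Matrix (Fin n) (Fin n) ℂ) (hU : Uᴴ * U = 1) (hU' : U * Uᴴ = 1) :
    ∑ k, ‖(U * (Matrix.PosSemidef.sqrt hW.posSemidef)) k k‖ ^ 2 ≤
      ((Matrix.PosSemidef.sqrt hW.posSemidef).trace.re) ^ 2 / n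
        + Real.sqrt (n * lammax) * ∑ k, |q k - 1 / n| := by
  set S := hW.posSemidef.sqrt with hSdef
  have hS : S.PosSemidef := hW.posSemidef.posSemidef_sqrt
  have hSS : S * S = W := hW.posSemidef.sqrt_mul_self
  have hSH : S.IsHermitian := hS.isHermitian
  set T := hS.sqrt with hTdef
  have hT : T.PosSemidef := hS.posSemidef_sqrt
  have hTT : T * T = S := hS.sqrt_mul_self
  have hTH : T.IsHermitian := hT.isHermitian
  set t := S.trace.re with ht
  set a : Fin n → ℝ := fun k => ((U * S * Uᴴ) k k).re with ha
  set s : Fin n → ℝ := fun k => ((S k k).re) with hs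
  -- S is positive definite
  have hSpd : S.PosDef := by
    refine PosDef.of_dotProduct_mulVec_pos hSH (fun x hx => ?_)
    have hrw : star x ⬝ᵥ S *ᵥ x = star (T *ᵥ x) ⬝ᵥ (T *ᵥ x) := by
      rw [star_mulVec, ← dotProduct_mulVec, mulVec_mulVec, hTH.eq, hTT]
    refine lt_of_le_of_ne (hS.dotProduct_mulVec_nonneg x) (fun h0 => hx ?_)
    have hTx : T *ᵥ x = 0 := by
      rw [← dotProduct_star_self_eq_zero (v := T *ᵥ x), ← hrw, ← h0]
    have hSx : S *ᵥ x = 0 := by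
      rw [← hTT, ← mulVec_mulVec, hTx, mulVec_zero]
    have hWx : W *ᵥ x = 0 := by
      rw [← hSS, ← mulVec_mulVec, hSx, mulVec_zero]
    by_contra hxne
    have := hW.dotProduct_mulVec_pos hxne
    rw [hWx, dotProduct_zero] at this
    exact lt_irrefl _ this
  -- diagonal entries of S
  have hdiagS : ∀ k, star (Pi.single k 1 : Fin n → ℂ) ⬝ᵥ S *ᵥ (Pi.single k 1) = S k k := by
    intro k
    simp [dotProduct, mulVec, Pi.single_apply, Finset.sum_ite_eq, Finset.mul_sum]
  have hs_pos : ∀ k, 0 < s k := by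
    intro k
    have h1 := hSpd.dotProduct_mulVec_pos (x := Pi.single k 1) (by simp [Pi.single_eq_same, Function.ne_iff])
    rw [hdiagS k] at h1
    exact (Complex.lt_def.mp h1).1
  have ht_pos : 0 < t := by
    rw [ht, trace, Complex.re_sum]
    haveI : Nonempty (Fin n) := ⟨⟨0, hn⟩⟩
    exact Finset.sum_pos (fun k _ => hs_pos k) Finset.univ_nonempty
  -- lammax nonneg and eigenvalue bound
  have hbdd : BddAbove (Set.range hW.posSemidef.isHermitian.eigenvalues) :=
    Set.Finite.bddAbove (Set.finite_range _)
  have hlam_ub : ∀ i, hW.posSemidef.isHermitian.eigenvalues i ≤ lammax := by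
    intro i; rw [hlam]; exact le_ciSup hbdd i
  have hlam_nonneg : 0 ≤ lammax := by
    have i : Fin n := ⟨0, hn⟩
    exact le_trans (hW.posSemidef.eigenvalues_nonneg i) (hlam_ub i)
  -- Step A : per-entry Cauchy-Schwarz
  have stepA : ∀ k, ‖(U * S) k k‖ ^ 2 ≤ a k * s k := by
    intro k
    have hcs := cs_dot (fun j => star ((U * T) k j)) (fun j => T j k)
    have e1 : star (fun j => star ((U * T) k j)) ⬝ᵥ (fun j => T j k) = (U * S) k k := by
      rw [← hTT, ← mul_assoc]
      simp [dotProduct, mul_apply]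
    have e2 : (star (fun j => star ((U * T) k j)) ⬝ᵥ (fun j => star ((U * T) k j))) =
        (U * S * Uᴴ) k k := by
      have : U * S * Uᴴ = (U * T) * (U * T)ᴴ := by
        rw [conjTranspose_mul, hTH.eq, ← hTT]; noncomm_ring
      rw [this]
      simp only [dotProduct, mul_apply, conjTranspose_apply, Pi.star_apply, star_star, map_sum]
    have e3 : star (fun j => T j k) ⬝ᵥ (fun j => T j k) = S k k := by
      have : S k k = (Tᴴ * T) k k := by rw [hTH.eq, hTT]
      rw [this]
      simp [dotProduct, mul_apply, conjTranspose_apply]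
    rw [e1, e2, e3] at hcs
    exact hcs
  -- bounds on a
  have ha_eq : ∀ k, (U * S * Uᴴ) k k =
      star (fun j => star (U k j)) ⬝ᵥ S *ᵥ (fun j => star (U k j)) := by
    intro k
    simp only [dotProduct, mulVec, mul_apply, conjTranspose_apply, Pi.star_apply, star_star,
      dotProduct, Finset.sum_mul, Finset.mul_sum]
    rw [Finset.sum_comm]
    congr 1; funext j; congr 1; funext i; ring
  have ha_nonneg : ∀ k, 0 ≤ a k := by
    intro k
    have := hS.dotProduct_mulVec_nonneg (fun j => star (U k j))
    rw [← ha_eq k] at this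
    exact (Complex.le_def.mp this).1
  have hvv : ∀ k, star (fun j => star (U k j)) ⬝ᵥ (fun j => star (U k j)) = 1 := by
    intro k
    have : (U * Uᴴ) k k = 1 := by rw [hU']; simp [one_apply]
    rw [← this]
    simp [dotProduct, mul_apply, conjTranspose_apply]
  have ha_le : ∀ k, a k ≤ Real.sqrt lammax := by
    intro k
    set v : Fin n → ℂ := fun j => star (U k j) with hv
    have hcs := cs_dot v (S *ᵥ v)
    have hWv : star (S *ᵥ v) ⬝ᵥ (S *ᵥ v) = star v ⬝ᵥ W *ᵥ v := by
      rw [star_mulVec, hSH.eq, ← dotProduct_mulVec, mulVec_mulVec, hSS]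
    have hq2 := quad_le hW.posSemidef.isHermitian hlam_ub v
    have hvv1 : (star v ⬝ᵥ v).re = 1 := by rw [hvv k]; simp
    rw [hWv] at hcs
    have habs : ‖star v ⬝ᵥ S *ᵥ v‖ ^ 2 ≤ lammax := by
      calc ‖star v ⬝ᵥ S *ᵥ v‖ ^ 2
          ≤ (star v ⬝ᵥ v).re * (star v ⬝ᵥ W *ᵥ v).re := hcs
        _ = (star v ⬝ᵥ W *ᵥ v).re := by rw [hvv1, one_mul]
        _ ≤ lammax * (star v ⬝ᵥ v).re := hq2
        _ = lammax := by rw [hvv1, mul_one]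
    have : a k ≤ ‖star v ⬝ᵥ S *ᵥ v‖ := by
      rw [ha]; simp only []
      rw [ha_eq k]
      exact Complex.re_le_norm _
    exact this.trans (Real.le_sqrt_of_sq_le habs)
  -- trace identities
  have hsum_a : ∑ k, a k = t := by
    have h1 : (U * S * Uᴴ).trace = S.trace := by
      rw [trace_mul_cycle, hU, one_mul]
    calc ∑ k, a k = (U * S * Uᴴ).trace.re := by rw [trace, Complex.re_sum]; rfl
      _ = S.trace.re := by rw [h1]
      _ = t := rfl
  have hsum_s : ∑ k, s k = t := by
    rw [ht, trace, Complex.re_sum]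
    rfl
  -- t ≤ sqrt n
  have ht_le : t ≤ Real.sqrt n := by
    apply Real.le_sqrt_of_sq_le
    have h1 : (∑ k, s k) ^ 2 ≤ ((Finset.univ : Finset (Fin n)).card : ℝ) * ∑ k, s k ^ 2 := by
      exact_mod_cast sq_sum_le_card_mul_sum_sq (s := (Finset.univ : Finset (Fin n))) (f := s)
    have h2 : ∑ k, s k ^ 2 ≤ 1 := by
      have hterm : ∀ k, s k ^ 2 ≤ ∑ j, Complex.normSq (S k j) := by
        intro k
        calc s k ^ 2 ≤ Complex.normSq (S k k) := by
              rw [Complex.normSq_apply]; nlinarith [sq_nonneg (S k k).im]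
          _ ≤ ∑ j, Complex.normSq (S k j) :=
            Finset.single_le_sum (fun j _ => Complex.normSq_nonneg _) (Finset.mem_univ k)
      have htrW : (∑ k, ∑ j, Complex.normSq (S k j)) = 1 := by
        have h3 : (S * Sᴴ).trace = 1 := by rw [hSH.eq, hSS, htr]
        have := congrArg Complex.re h3
        rw [trace, Complex.re_sum] at this
        simp only [Matrix.diag_apply, mul_apply, conjTranspose_apply, Complex.one_re] at this
        rw [← this]
        congr 1; funext k
        rw [Complex.re_sum]
        congr 1; funext j
        simp [Complex.star_def, Complex.mul_conj]
      calc ∑ k, s k ^ 2 ≤ ∑ k, ∑ j, Complex.normSq (S k j) :=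
            Finset.sum_le_sum fun k _ => hterm k
        _ = 1 := htrW
    rw [hsum_s] at h1
    simpa using h1.trans (by simpa using mul_le_mul_of_nonneg_left h2 (Nat.cast_nonneg n))
  -- relation between s and q
  have hsq : ∀ k, |s k - t / n| = t * |q k - 1 / n| := by
    intro k
    rw [hq k]
    rw [← abs_of_pos ht_pos, ← abs_mul]
    congr 1
    have hsk : (S k k).re = s k := rfl
    rw [hsk]
    field_simp
    rw [abs_of_pos ht_pos]
    ring
  -- final assembly
  calc ∑ k, ‖(U * S) k k‖ ^ 2
      ≤ ∑ k, a k * s k := Finset.sum_le_sum fun k _ => stepA k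
    _ = (∑ k, a k) * (t / n) + ∑ k, a k * (s k - t / n) := by
        rw [Finset.sum_mul, ← Finset.sum_add_distrib]
        exact Finset.sum_congr rfl fun k _ => by ring
    _ ≤ t * (t / n) + ∑ k, Real.sqrt lammax * |s k - t / n| := by
        rw [hsum_a]
        refine add_le_add_right (Finset.sum_le_sum fun k _ => ?_) _
        calc a k * (s k - t / n) ≤ a k * |s k - t / n| :=
              mul_le_mul_of_nonneg_left (le_abs_self _) (ha_nonneg k)
          _ ≤ Real.sqrt lammax * |s k - t / n| :=
              mul_le_mul_of_nonneg_right (ha_le k) (abs_nonneg _)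
    _ ≤ t ^ 2 / n + Real.sqrt (n * lammax) * ∑ k, |q k - 1 / n| := by
        have e1 : t * (t / n) = t ^ 2 / n := by ring
        have e2 : ∑ k, Real.sqrt lammax * |s k - t / n|
            = (Real.sqrt lammax * t) * ∑ k, |q k - 1 / n| := by
          rw [Finset.mul_sum]
          exact Finset.sum_congr rfl fun k _ => by rw [hsq k]; ring
        rw [e1, e2]
        have hst : Real.sqrt lammax * t ≤ Real.sqrt (n * lammax) := by
          rw [Real.sqrt_mul (Nat.cast_nonneg n) lammax]
          calc Real.sqrt lammax * t ≤ Real.sqrt lammax * Real.sqrt n :=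
                mul_le_mul_of_nonneg_left ht_le (Real.sqrt_nonneg _)
            _ = Real.sqrt n * Real.sqrt lammax := mul_comm _ _
        exact add_le_add_right (mul_le_mul_of_nonneg_right hst
          (Finset.sum_nonneg fun k _ => abs_nonneg _)) _
    _ = _ := by rw [ht]
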